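/- For every topological space X, the following are equivalent: (1) X is consonant; (2) the map σ : A(K(X)) → K(A(X)), σ(𝒜) = {A closed | ∀K ∈ 𝒜, A ∩ K ≠ ∅}, is a bijection; (3) the map τ : K(A(X)) → A(K(X)), τ(𝒦) = {K compact saturated | ∀A ∈ 𝒦, A ∩ K ≠ ∅}, satisfies τ⁻¹(◇□U) = □◇U for every open U ⊆ X. -/
import Mathlib


open Set Topology

/-- The lower powerspace: closed subsets of `X`. -/
def LowerPS (X : Type*) [TopologicalSpace X] : Type _ := {A : Set X // IsClosed A}

/-- Lower Vietoris topology, generated by the sets `◇U = {A | A ∩ U ≠ ∅}` for `U` open. -/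
instance (X : Type*) [TopologicalSpace X] : TopologicalSpace (LowerPS X) :=
  .generateFrom {S | ∃ U : Set X, IsOpen U ∧ S = {A : LowerPS X | (A.1 ∩ U).Nonempty}}

/-- The upper powerspace: compact saturated subsets of `X`
(saturated = intersection of all open neighborhoods). -/
def UpperPS (X : Type*) [TopologicalSpace X] : Type _ :=
  {K : Set X // IsCompact K ∧ K = ⋂₀ {U : Set X | IsOpen U ∧ K ⊆ U}}

/-- Upper Vietoris topology, generated by the sets `□U = {K | K ⊆ U}` for `U` open. -/
instance (X : Type*) [TopologicalSpace X] : TopologicalSpace (UpperPS X) :=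
  .generateFrom {S | ∃ U : Set X, IsOpen U ∧ S = {K : UpperPS X | K.1 ⊆ U}}

/-- A `Π⁰₂` subset. -/
def IsPi02 {Y : Type*} [TopologicalSpace Y] (S : Set Y) : Prop :=
  ∃ U V : ℕ → Set Y, (∀ i, IsOpen (U i)) ∧ (∀ i, IsOpen (V i)) ∧
    ∀ y, y ∈ S ↔ ∀ i, y ∈ U i → y ∈ V i

/-- The Scott topology on `P(ω)`, generated by the sets `{x | F ⊆ x}` for finite `F`. -/
instance : TopologicalSpace (Set ℕ) :=
  .generateFrom {S | ∃ F : Finset ℕ, S = {x : Set ℕ | ↑F ⊆ x}}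

/-- A space is quasi-Polish iff it is homeomorphic to a `Π⁰₂` subspace of `P(ω)`
with the Scott topology. -/
def QuasiPolish (X : Type*) [TopologicalSpace X] : Prop :=
  ∃ S : Set (Set ℕ), IsPi02 S ∧ Nonempty (X ≃ₜ S)

/-- Scott-open subsets of a preorder. -/
def IsScottOpen {α : Type*} [Preorder α] (U : Set α) : Prop :=
  (∀ ⦃a b : α⦄, a ≤ b → a ∈ U → b ∈ U) ∧
  ∀ d : Set α, d.Nonempty → DirectedOn (· ≤ ·) d → ∀ a : α, IsLUB d a → a ∈ U →
    (d ∩ U).Nonempty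

/-- The Scott topology on a preorder. -/
def scottTop (α : Type*) [Preorder α] : TopologicalSpace α := .generateFrom {U | IsScottOpen U}

/-- The frame of open subsets of `X`, ordered by inclusion. -/
def OpensT (X : Type*) [TopologicalSpace X] : Type _ := {U : Set X // IsOpen U}

instance (X : Type*) [TopologicalSpace X] : PartialOrder (OpensT X) :=
  inferInstanceAs (PartialOrder {U : Set X // IsOpen U})

/-- `O(X)` carries the Scott topology. -/
instance (X : Type*) [TopologicalSpace X] : TopologicalSpace (OpensT X) := scottTop (OpensT X)

/-- `□◇U` in `K(A(X))`. -/
def boxDia {X : Type*} [TopologicalSpace X] (U : Set X) : Set (UpperPS (LowerPS X)) :=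
  {𝒦 | ∀ A ∈ 𝒦.1, ((A : LowerPS X).1 ∩ U).Nonempty}

/-- `◇□U` in `A(K(X))`. -/
def diaBox {X : Type*} [TopologicalSpace X] (U : Set X) : Set (LowerPS (UpperPS X)) :=
  {𝒜 | ∃ K ∈ 𝒜.1, (K : UpperPS X).1 ⊆ U}

/-- A space is consonant iff every Scott-open family of opens containing `U` contains
a compact-saturated filter neighborhood `▽K` of `U`. -/
def Consonant (X : Type*) [TopologicalSpace X] : Prop :=
  ∀ H : Set (OpensT X), IsScottOpen H → ∀ U ∈ H,
    ∃ K : UpperPS X, K.1 ⊆ U.1 ∧ ∀ V : OpensT X, K.1 ⊆ V.1 → V ∈ H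

/-- A space is co-consonant. -/
def CoConsonant (Y : Type*) [TopologicalSpace Y] : Prop :=
  ∀ H : Set (OpensT Y), IsScottOpen H → ∀ U ∈ H,
    ∃ F : Finset (Set Y), (∀ A ∈ F, IsClosed A) ∧ (∀ A ∈ F, (U.1 ∩ A).Nonempty) ∧
      ∀ V : OpensT Y, (∀ A ∈ F, (V.1 ∩ A).Nonempty) → V ∈ H


section AuxiliaryLemmas

open TopologicalSpace

/-- Alexander subbase lemma. -/
lemma alexanderSubbase {α : Type*} [t : TopologicalSpace α] {g : Set (Set α)}
    (hg : t = TopologicalSpace.generateFrom g) {K : Set α}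
    (h : ∀ C ⊆ g, K ⊆ ⋃₀ C → ∃ F : Finset (Set α), ↑F ⊆ C ∧ K ⊆ ⋃₀ (↑F : Set (Set α))) :
    IsCompact K := by
  rw [isCompact_iff_ultrafilter_le_nhds]
  intro f hf
  by_contra hcon
  push_neg at hcon
  have key : ∀ a ∈ K, ∃ s ∈ g, a ∈ s ∧ s ∉ f := by
    intro a ha
    by_contra hs
    push_neg at hs
    refine hcon a ha ?_
    rw [hg, nhds_generateFrom]
    exact le_iInf₂ fun s hs' => Filter.le_principal_iff.mpr (hs s hs'.2 hs'.1)
  obtain ⟨F, hFC, hKF⟩ := h {s | s ∈ g ∧ s ∉ f} (fun s hs => hs.1)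
    (fun a ha => let ⟨s, h1, h2, h3⟩ := key a ha; ⟨s, ⟨h1, h3⟩, h2⟩)
  have hKf : K ∈ f := Filter.le_principal_iff.mp hf
  have hcompl : (⋂ s ∈ (↑F : Set (Set α)), sᶜ) ∈ f :=
    (Filter.biInter_mem F.finite_toSet).mpr
      fun s hs => (Ultrafilter.compl_mem_iff_notMem).mpr (hFC hs).2
  obtain ⟨a, haK, haI⟩ := f.nonempty_of_mem (Filter.inter_mem hKf hcompl)
  obtain ⟨s, hsF, has⟩ := hKF haK
  exact (Set.mem_iInter₂.1 haI s hsF) has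


lemma mem_of_val_eq {α : Type*} {p : α → Prop} {S : Set (Subtype p)} {a b : Subtype p}
    (h : a.1 = b.1) (ha : a ∈ S) : b ∈ S := (Subtype.ext h : a = b) ▸ ha

variable {X : Type*} [TopologicalSpace X]

lemma dia_isOpen {U : Set X} (hU : IsOpen U) :
    IsOpen {A : LowerPS X | (A.1 ∩ U).Nonempty} :=
  TopologicalSpace.GenerateOpen.basic _ ⟨U, hU, rfl⟩

/-- Open subsets of the lower powerspace are upward closed. -/
lemma lower_upclosed {G : Set (LowerPS X)} (hG : IsOpen G) {A B : LowerPS X}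
    (hAB : A.1 ⊆ B.1) : A ∈ G → B ∈ G := by
  have hG' : TopologicalSpace.GenerateOpen
      {S | ∃ U : Set X, IsOpen U ∧ S = {A : LowerPS X | (A.1 ∩ U).Nonempty}} G := hG
  clear hG
  induction hG' with
  | basic s hs =>
      obtain ⟨U, hU, rfl⟩ := hs
      exact fun ⟨x, hx1, hx2⟩ => ⟨x, hAB hx1, hx2⟩
  | univ => exact fun _ => trivial
  | inter s t _ _ ihs iht => exact fun h => ⟨ihs h.1, iht h.2⟩
  | sUnion S _ ih => exact fun ⟨s, hsS, hAs⟩ => ⟨s, hsS, ih s hsS hAs⟩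

/-- The sets `□V` form a basis of the upper powerspace. -/
lemma upper_basis {G : Set (UpperPS X)} (hG : IsOpen G) {K : UpperPS X} :
    K ∈ G → ∃ V : Set X, IsOpen V ∧ K.1 ⊆ V ∧ {L : UpperPS X | L.1 ⊆ V} ⊆ G := by
  have hG' : TopologicalSpace.GenerateOpen
      {S | ∃ U : Set X, IsOpen U ∧ S = {K : UpperPS X | K.1 ⊆ U}} G := hG
  clear hG
  induction hG' with
  | basic s hs =>
      obtain ⟨U, hU, rfl⟩ := hs
      exact fun hK => ⟨U, hU, hK, fun _ hL => hL⟩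
  | univ => exact fun _ => ⟨Set.univ, isOpen_univ, Set.subset_univ _, fun _ _ => trivial⟩
  | inter s t _ _ ihs iht =>
      intro hK
      obtain ⟨V1, h1, hK1, hs1⟩ := ihs hK.1
      obtain ⟨V2, h2, hK2, hs2⟩ := iht hK.2
      exact ⟨V1 ∩ V2, h1.inter h2, Set.subset_inter hK1 hK2,
        fun L hL => ⟨hs1 fun x hx => (hL hx).1, hs2 fun x hx => (hL hx).2⟩⟩
  | sUnion S _ ih =>
      rintro ⟨s, hsS, hKs⟩
      obtain ⟨V, hV, hKV, hs⟩ := ih s hsS hKs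
      exact ⟨V, hV, hKV, fun L hL => ⟨s, hsS, hs hL⟩⟩

lemma directedOn_finset_ub {α : Type*} [Preorder α] {d : Set α}
    (hd : DirectedOn (· ≤ ·) d) (hne : d.Nonempty) (t : Finset {x // x ∈ d}) :
    ∃ W ∈ d, ∀ i ∈ t, (i : {x // x ∈ d}).1 ≤ W := by
  classical
  induction t using Finset.induction with
  | empty => exact hne.imp fun W hW => ⟨hW, by simp⟩
  | @insert x s hx ih =>
      obtain ⟨W, hW, hWs⟩ := ih
      obtain ⟨Z, hZ, hxZ, hWZ⟩ := hd x.1 x.2 W hW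
      refine ⟨Z, hZ, fun i hi => ?_⟩
      rcases Finset.mem_insert.1 hi with h | h
      · exact h ▸ hxZ
      · exact le_trans (hWs i h) hWZ

/-- The set-level map `σ`. -/
def sigmaSet (𝒜 : Set (UpperPS X)) : Set (LowerPS X) :=
  {A | ∀ K ∈ 𝒜, (A.1 ∩ K.1).Nonempty}

/-- The set-level map `τ`. -/
def tauSet (𝒦 : Set (LowerPS X)) : Set (UpperPS X) :=
  {K | ∀ A ∈ 𝒦, (A.1 ∩ K.1).Nonempty}

/-- `τ ∘ σ = id` holds unconditionally. -/
lemma tauSet_sigmaSet (𝒜 : LowerPS (UpperPS X)) : tauSet (sigmaSet 𝒜.1) = 𝒜.1 := by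
  apply Set.Subset.antisymm
  · intro K hK
    by_contra hKA
    obtain ⟨V, hV, hKV, hbox⟩ := upper_basis 𝒜.2.isOpen_compl hKA
    have hA : (⟨Vᶜ, hV.isClosed_compl⟩ : LowerPS X) ∈ sigmaSet 𝒜.1 := by
      intro L hL
      have hns : ¬ L.1 ⊆ V := fun hsub => (hbox hsub) hL
      obtain ⟨x, hx1, hx2⟩ := Set.not_subset.1 hns
      exact ⟨x, hx2, hx1⟩
    obtain ⟨x, hx1, hx2⟩ := hK _ hA
    exact hx1 (hKV hx2)
  · exact fun K hK A hA => hA K hK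

/-- Property (3) at the level of sets. -/
def ConsP3 (X : Type*) [TopologicalSpace X] : Prop :=
  ∀ U : Set X, IsOpen U → ∀ 𝒦 : UpperPS (LowerPS X),
    (∀ A ∈ 𝒦.1, (A.1 ∩ U).Nonempty) →
      ∃ K : UpperPS X, K.1 ⊆ U ∧ ∀ A ∈ 𝒦.1, (A.1 ∩ K.1).Nonempty

lemma consonant_p3 (hc : Consonant X) : ConsP3 X := by
  intro U hU 𝒦 h𝒦
  set ℋ : Set (OpensT X) := {V | ∀ A ∈ 𝒦.1, (A.1 ∩ V.1).Nonempty} with hℋ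
  have hscott : IsScottOpen ℋ := by
    constructor
    · intro a b hab ha A hA
      obtain ⟨x, hx1, hx2⟩ := ha A hA
      exact ⟨x, hx1, hab hx2⟩
    · intro d hdne hdir a hlub ha
      have haU : a.1 = ⋃ V ∈ d, (V : OpensT X).1 := by
        apply Set.Subset.antisymm
        · have hub : (⟨⋃ V ∈ d, (V : OpensT X).1, isOpen_biUnion fun V _ => V.2⟩ : OpensT X)
              ∈ upperBounds d := by
            intro V hV
            show V.1 ⊆ ⋃ W ∈ d, (W : OpensT X).1
            exact Set.subset_biUnion_of_mem hV
          exact hlub.2 hub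
        · exact Set.iUnion₂_subset fun V hV => hlub.1 hV
      have hcov : 𝒦.1 ⊆ ⋃ i : d, {A : LowerPS X | (A.1 ∩ (i : OpensT X).1).Nonempty} := by
        intro A hA
        obtain ⟨x, hx1, hx2⟩ := ha A hA
        rw [haU] at hx2
        obtain ⟨V, hV, hxV⟩ := Set.mem_iUnion₂.1 hx2
        exact Set.mem_iUnion.2 ⟨⟨V, hV⟩, ⟨x, hx1, hxV⟩⟩
      obtain ⟨t, ht⟩ := 𝒦.2.1.elim_finite_subcover _
        (fun i : d => dia_isOpen (i : OpensT X).2) hcov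
      obtain ⟨W, hWd, hWub⟩ := directedOn_finset_ub hdir hdne t
      refine ⟨W, hWd, fun A hA => ?_⟩
      obtain ⟨i, hit, hAi⟩ := Set.mem_iUnion₂.1 (ht hA)
      obtain ⟨x, hx1, hx2⟩ := hAi
      exact ⟨x, hx1, hWub i hit hx2⟩
  obtain ⟨K, hKU, hK⟩ := hc ℋ hscott ⟨U, hU⟩ h𝒦
  refine ⟨K, hKU, fun A hA => ?_⟩
  by_contra hne
  have hsub : K.1 ⊆ A.1ᶜ := fun x hx hxA => hne ⟨x, hxA, hx⟩
  obtain ⟨x, hx1, hx2⟩ := hK ⟨A.1ᶜ, A.2.isOpen_compl⟩ hsub A hA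
  exact hx2 hx1

lemma p3_consonant (h3 : ConsP3 X) : Consonant X := by
  intro ℋ hscott U hU
  classical
  set KS : Set (LowerPS X) := {A | (⟨A.1ᶜ, A.2.isOpen_compl⟩ : OpensT X) ∉ ℋ} with hKS
  have hcomp : IsCompact KS := by
    apply alexanderSubbase rfl
    intro C hC hcover
    set 𝒱 : Set (Set X) := {V | IsOpen V ∧ {A : LowerPS X | (A.1 ∩ V).Nonempty} ∈ C} with h𝒱
    have hCeq : ∀ s ∈ C, ∃ V ∈ 𝒱, s = {A : LowerPS X | (A.1 ∩ V).Nonempty} := by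
      intro s hs
      obtain ⟨V, hV, rfl⟩ := hC hs
      exact ⟨V, ⟨hV, hs⟩, rfl⟩
    have hWopen : IsOpen (⋃₀ 𝒱) := isOpen_sUnion fun V hV => hV.1
    have hWmem : (⟨⋃₀ 𝒱, hWopen⟩ : OpensT X) ∈ ℋ := by
      by_contra hWH
      have hmem : (⟨(⋃₀ 𝒱)ᶜ, hWopen.isClosed_compl⟩ : LowerPS X) ∈ KS :=
        fun hmem' => hWH (mem_of_val_eq (compl_compl _) hmem')
      obtain ⟨s, hsC, hs⟩ := hcover hmem
      obtain ⟨V, hV𝒱, rfl⟩ := hCeq s hsC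
      obtain ⟨x, hx1, hx2⟩ := hs
      exact hx1 (Set.subset_sUnion_of_mem hV𝒱 hx2)
    set d : Set (OpensT X) :=
      {V' | ∃ F : Finset (Set X), ↑F ⊆ 𝒱 ∧ V'.1 = ⋃₀ ↑F} with hd
    have hdne : d.Nonempty := ⟨⟨∅, isOpen_empty⟩, ⟨∅, by simp, by simp⟩⟩
    have hdir : DirectedOn (· ≤ ·) d := by
      rintro x ⟨F1, hF1, hx1⟩ y ⟨F2, hF2, hy2⟩
      have hopen : IsOpen (⋃₀ (↑(F1 ∪ F2) : Set (Set X))) := by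
        apply isOpen_sUnion
        intro V hV
        rw [Finset.coe_union] at hV
        rcases hV with h | h
        · exact (hF1 h).1
        · exact (hF2 h).1
      refine ⟨⟨⋃₀ (↑(F1 ∪ F2) : Set (Set X)), hopen⟩,
        ⟨F1 ∪ F2, ?_, rfl⟩, ?_, ?_⟩
      · rw [Finset.coe_union]; exact Set.union_subset hF1 hF2
      · show x.1 ⊆ ⋃₀ (↑(F1 ∪ F2) : Set (Set X))
        rw [hx1]
        exact Set.sUnion_subset_sUnion (Finset.coe_subset.2 Finset.subset_union_left)
      · show y.1 ⊆ ⋃₀ (↑(F1 ∪ F2) : Set (Set X))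
        rw [hy2]
        exact Set.sUnion_subset_sUnion (Finset.coe_subset.2 Finset.subset_union_right)
    have hlub : IsLUB d (⟨⋃₀ 𝒱, hWopen⟩ : OpensT X) := by
      constructor
      · rintro V' ⟨F, hF, hV'⟩
        show V'.1 ⊆ ⋃₀ 𝒱
        rw [hV']
        exact Set.sUnion_subset_sUnion hF
      · intro b hb
        show ⋃₀ 𝒱 ⊆ b.1
        apply Set.sUnion_subset
        intro V hV
        have hmem : (⟨V, hV.1⟩ : OpensT X) ∈ d := ⟨{V}, by simpa using hV, by simp⟩
        exact hb hmem
    obtain ⟨V', hV'd, hV'ℋ⟩ := hscott.2 d hdne hdir _ hlub hWmem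
    obtain ⟨F, hF𝒱, hV'F⟩ := hV'd
    refine ⟨F.image (fun V => {A : LowerPS X | (A.1 ∩ V).Nonempty}), ?_, ?_⟩
    · intro s hs
      rw [Finset.coe_image] at hs
      obtain ⟨V, hV, rfl⟩ := hs
      exact (hF𝒱 hV).2
    · intro A hA
      have hexV : ∃ V ∈ F, (A.1 ∩ V).Nonempty := by
        by_contra hng
        push_neg at hng
        have hsub : V'.1 ⊆ A.1ᶜ := by
          rw [hV'F]
          rintro x ⟨V, hVF, hxV⟩ hxA
          have hx : x ∈ A.1 ∩ V := ⟨hxA, hxV⟩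
          rw [hng V hVF] at hx
          exact hx
        exact hA (hscott.1 (hsub : V' ≤ ⟨A.1ᶜ, A.2.isOpen_compl⟩) hV'ℋ)
      obtain ⟨V, hVF, hAV⟩ := hexV
      exact ⟨{A : LowerPS X | (A.1 ∩ V).Nonempty},
        by rw [Finset.coe_image]; exact ⟨V, hVF, rfl⟩, hAV⟩
  have hsat : KS = ⋂₀ {G : Set (LowerPS X) | IsOpen G ∧ KS ⊆ G} := by
    apply Set.Subset.antisymm
    · exact Set.subset_sInter fun G hG => hG.2
    · intro B hB
      by_contra hBKS
      have hBH : (⟨B.1ᶜ, B.2.isOpen_compl⟩ : OpensT X) ∈ ℋ := not_not.mp hBKS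
      have hKSG : KS ⊆ {A : LowerPS X | (A.1 ∩ B.1ᶜ).Nonempty} := by
        intro A hA
        by_contra hne
        have hsub : B.1ᶜ ⊆ A.1ᶜ := by
          intro x hx hxA
          exact hne ⟨x, hxA, hx⟩
        exact hA (hscott.1
          (hsub : (⟨B.1ᶜ, B.2.isOpen_compl⟩ : OpensT X) ≤ ⟨A.1ᶜ, A.2.isOpen_compl⟩) hBH)
      obtain ⟨x, hx1, hx2⟩ := hB _ ⟨dia_isOpen B.2.isOpen_compl, hKSG⟩
      exact hx2 hx1
  have hmeet : ∀ A ∈ KS, (A.1 ∩ U.1).Nonempty := by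
    intro A hA
    by_contra hne
    have hsub : U.1 ⊆ A.1ᶜ := fun x hx hxA => hne ⟨x, hxA, hx⟩
    exact hA (hscott.1 (hsub : U ≤ ⟨A.1ᶜ, A.2.isOpen_compl⟩) hU)
  obtain ⟨K, hKU, hKmeet⟩ := h3 U.1 U.2 ⟨KS, hcomp, hsat⟩ hmeet
  refine ⟨K, hKU, fun V hKV => ?_⟩
  by_contra hVH
  have hAKS : (⟨V.1ᶜ, V.2.isClosed_compl⟩ : LowerPS X) ∈ KS :=
    fun hmem' => hVH (mem_of_val_eq (compl_compl _) hmem')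
  obtain ⟨x, hx1, hx2⟩ := hKmeet _ hAKS
  exact hx1 (hKV hx2)

/-- Under (3), `σ ∘ τ = id`. -/
lemma sigmaSet_tauSet_of_p3 (h3 : ConsP3 X) (𝒦 : UpperPS (LowerPS X)) :
    sigmaSet (tauSet 𝒦.1) = 𝒦.1 := by
  apply Set.Subset.antisymm
  · intro A hA
    by_cases hex : ∃ B ∈ 𝒦.1, B.1 ⊆ A.1
    · obtain ⟨B, hB, hBA⟩ := hex
      rw [𝒦.2.2]
      exact fun G hG => lower_upclosed hG.1 hBA (hG.2 hB)
    · push_neg at hex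
      exfalso
      have hmeet : ∀ B ∈ 𝒦.1, ((B : LowerPS X).1 ∩ A.1ᶜ).Nonempty := by
        intro B hB
        obtain ⟨x, hx1, hx2⟩ := Set.not_subset.1 (hex B hB)
        exact ⟨x, hx1, hx2⟩
      obtain ⟨K, hKU, hKm⟩ := h3 A.1ᶜ A.2.isOpen_compl 𝒦 hmeet
      obtain ⟨x, hx1, hx2⟩ := hA K hKm
      exact hKU hx2 hx1
  · exact fun A hA K hK => hK A hA

/-- Surjectivity of `σ` implies (3). -/
lemma surj_p3 (σ : LowerPS (UpperPS X) → UpperPS (LowerPS X))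
    (hσ : ∀ 𝒜, (σ 𝒜).1 = sigmaSet 𝒜.1) (hsurj : Function.Surjective σ) : ConsP3 X := by
  intro U hU 𝒦 h𝒦
  obtain ⟨𝒜, rfl⟩ := hsurj 𝒦
  by_cases hex : ∃ K ∈ tauSet (σ 𝒜).1, K.1 ⊆ U
  · obtain ⟨K, hKt, hKU⟩ := hex
    exact ⟨K, hKU, hKt⟩
  · exfalso
    push_neg at hex
    have h1 : tauSet (σ 𝒜).1 = 𝒜.1 := by rw [hσ]; exact tauSet_sigmaSet 𝒜
    have hA0 : (⟨Uᶜ, hU.isClosed_compl⟩ : LowerPS X) ∈ sigmaSet 𝒜.1 := by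
      intro K hK
      have hKm : K ∈ tauSet (σ 𝒜).1 := by rw [h1]; exact hK
      obtain ⟨x, hx1, hx2⟩ := Set.not_subset.1 (hex K hKm)
      exact ⟨x, hx2, hx1⟩
    rw [← hσ] at hA0
    obtain ⟨x, hx1, hx2⟩ := h𝒦 _ hA0
    exact hx1 hx2

end AuxiliaryLemmas

/-- For any topological space `X`, the following are equivalent: (1) `X` is consonant;
(2) `σ : A(K(X)) → K(A(X))` is a bijection; (3) `τ⁻¹(◇□U) = □◇U` for every open `U`. -/
theorem consonant_iff_sigma_bijective_iff_tau (X : Type*) [TopologicalSpace X]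
    (σ : LowerPS (UpperPS X) → UpperPS (LowerPS X))
    (hσ : ∀ 𝒜, (σ 𝒜).1 =
        {A : LowerPS X | ∀ K ∈ 𝒜.1, (A.1 ∩ (K : UpperPS X).1).Nonempty})
    (τ : UpperPS (LowerPS X) → LowerPS (UpperPS X))
    (hτ : ∀ 𝒦, (τ 𝒦).1 =
        {K : UpperPS X | ∀ A ∈ 𝒦.1, ((A : LowerPS X).1 ∩ K.1).Nonempty}) :
    (Consonant X ↔ Function.Bijective σ) ∧
      (Consonant X ↔ ∀ U : Set X, IsOpen U → τ ⁻¹' diaBox U = boxDia U) := by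
  have hσ' : ∀ 𝒜, (σ 𝒜).1 = sigmaSet 𝒜.1 := hσ
  have hτ' : ∀ 𝒦, (τ 𝒦).1 = tauSet 𝒦.1 := hτ
  have hP3 : (∀ U : Set X, IsOpen U → τ ⁻¹' diaBox U = boxDia U) ↔ ConsP3 X := by
    constructor
    · intro h U hU 𝒦 h𝒦
      have hmem : 𝒦 ∈ τ ⁻¹' diaBox U := by rw [h U hU]; exact h𝒦
      obtain ⟨K, hK1, hK2⟩ := hmem
      rw [hτ' 𝒦] at hK1
      exact ⟨K, hK2, hK1⟩
    · intro h3 U hU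
      ext 𝒦
      constructor
      · rintro ⟨K, hK1, hK2⟩
        rw [hτ' 𝒦] at hK1
        intro A hA
        obtain ⟨x, hx1, hx2⟩ := hK1 A hA
        exact ⟨x, hx1, hK2 hx2⟩
      · intro h𝒦
        obtain ⟨K, hKU, hKm⟩ := h3 U hU 𝒦 h𝒦
        refine ⟨K, ?_, hKU⟩
        rw [hτ' 𝒦]
        exact hKm
  refine ⟨?_, ?_⟩
  · constructor
    · intro hc
      refine ⟨?_, ?_⟩
      · intro 𝒜 𝒜' heq
        apply Subtype.ext
        have h1 : sigmaSet 𝒜.1 = sigmaSet 𝒜'.1 := by rw [← hσ', ← hσ', heq]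
        rw [← tauSet_sigmaSet 𝒜, ← tauSet_sigmaSet 𝒜', h1]
      · intro 𝒦
        refine ⟨τ 𝒦, Subtype.ext ?_⟩
        calc (σ (τ 𝒦)).1 = sigmaSet (τ 𝒦).1 := hσ' _
          _ = sigmaSet (tauSet 𝒦.1) := by rw [hτ' 𝒦]
          _ = 𝒦.1 := sigmaSet_tauSet_of_p3 (consonant_p3 hc) 𝒦
    · intro hbij
      exact p3_consonant (surj_p3 σ hσ' hbij.2)
  · exact ⟨fun hc => hP3.mpr (consonant_p3 hc), fun h => p3_consonant (hP3.mp h)⟩
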